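/- Let G be a finite perfect simple graph, i.e., for every induced subgraph of G the chromatic number equals the clique number. Let D be a clique-acyclic orientation of G, i.e., each edge of G is assigned exactly one direction so that no cyclic triangle arises. Then the domination number satisfies γ(D) ≤ α(G), where α(G) is the independence number of G. -/

import Mathlib

open Finset

namespace Statement12Aux

section Part1

variable {V : Type} (G : SimpleGraph V)


def AdjB (x y : V × ℕ) : Prop := x ≠ y ∧ (x.1 = y.1 ∨ G.Adj x.1 y.1)
def IsCl (s : Finset (V × ℕ)) : Prop := ∀ x ∈ s, ∀ y ∈ s, x ≠ y → AdjB G x y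
lemma IsCl.empty : IsCl G (∅ : Finset (V × ℕ)) := by intro x hx; simp at hx
open scoped Classical in
noncomputable def om (s : Finset (V × ℕ)) : ℕ := (s.powerset.filter (IsCl G)).sup Finset.card
lemma le_om {s t : Finset (V × ℕ)} (hts : t ⊆ s) (ht : IsCl G t) : t.card ≤ om G s := by
  classical
  exact le_sup (by simp [om, Finset.mem_filter, Finset.mem_powerset, hts, ht])
lemma om_le {s : Finset (V × ℕ)} {n : ℕ} (h : ∀ t ⊆ s, IsCl G t → t.card ≤ n) :
    om G s ≤ n := by
  classical
  refine Finset.sup_le ?_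
  intro t ht
  simp only [Finset.mem_filter, Finset.mem_powerset] at ht
  exact h t ht.1 ht.2
lemma om_mono {s s' : Finset (V × ℕ)} (h : s' ⊆ s) : om G s' ≤ om G s :=
  om_le G fun t hts ht => le_om G (hts.trans h) ht
lemma exists_max_clique (s : Finset (V × ℕ)) :
    ∃ t ⊆ s, IsCl G t ∧ t.card = om G s := by
  classical
  have hne : (s.powerset.filter (IsCl G)).Nonempty := ⟨∅, by simp [IsCl.empty]⟩
  obtain ⟨t, ht, hcard⟩ := Finset.exists_mem_eq_sup _ hne Finset.card
  simp only [Finset.mem_filter, Finset.mem_powerset] at ht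
  exact ⟨t, ht.1, ht.2, hcard.symm⟩
def GoodCol (s : Finset (V × ℕ)) (n : ℕ) : Prop :=
  ∃ f : V × ℕ → ℕ, (∀ x ∈ s, f x < n) ∧ ∀ x ∈ s, ∀ y ∈ s, AdjB G x y → f x ≠ f y

lemma main [Fintype V]
    (hP : ∀ σ : Set V, (G.induce σ).Colorable (G.induce σ).cliqueNum) :
    ∀ s : Finset (V × ℕ), GoodCol G s (om G s) := by
  classical
  intro s
  induction s using Finset.strongInduction with
  | _ s ih =>
  by_cases hA : ∃ x₀ ∈ s, ∃ x₁ ∈ s, x₀ ≠ x₁ ∧ x₀.1 = x₁.1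
  · -- twins exist: replication step
    obtain ⟨x₀, hx₀, x₁, hx₁, hne, hfst⟩ := hA
    set s' := s.erase x₁ with hs'
    have hss : s' ⊂ s := Finset.erase_ssubset hx₁
    have hx₀' : x₀ ∈ s' := Finset.mem_erase.2 ⟨hne, hx₀⟩
    have hx₁s' : x₁ ∉ s' := Finset.notMem_erase _ _
    obtain ⟨f', hf'lt, hf'⟩ := ih s' hss
    set n := om G s with hn
    set n' := om G s' with hn'
    have hn'n : n' ≤ n := om_mono G (Finset.erase_subset _ _)
    have hnn' : n ≤ n' + 1 := by
      obtain ⟨t, hts, htcl, htcard⟩ := exists_max_clique G s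
      have h1 : (t.erase x₁) ⊆ s' := fun y hy => by
        rcases Finset.mem_erase.1 hy with ⟨h1, h2⟩
        exact Finset.mem_erase.2 ⟨h1, hts h2⟩
      have h2 : t.card ≤ (t.erase x₁).card + 1 := by
        have := Finset.card_insert_le x₁ (t.erase x₁)
        have h3 : t ⊆ insert x₁ (t.erase x₁) := by
          intro a ha
          by_cases hax : a = x₁
          · simp [hax]
          · exact Finset.mem_insert_of_mem (Finset.mem_erase.2 ⟨hax, ha⟩)
        calc t.card ≤ (insert x₁ (t.erase x₁)).card := Finset.card_le_card h3
          _ ≤ (t.erase x₁).card + 1 := this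
      have h4 : (t.erase x₁).card ≤ n' :=
        le_om G h1 (fun x hx y hy hxy =>
          htcl x (Finset.mem_of_mem_erase hx) y (Finset.mem_of_mem_erase hy) hxy)
      omega
    rcases lt_or_eq_of_le hn'n with hlt | heq
    · -- n' < n : give x₁ a fresh color
      refine ⟨fun x => if x = x₁ then n' else f' x, ?_, ?_⟩
      · intro x hx
        by_cases hxx : x = x₁
        · simp [hxx, hlt]
        · simp only [hxx, if_false]
          exact lt_of_lt_of_le (hf'lt x (Finset.mem_erase.2 ⟨hxx, hx⟩)) hn'n
      · intro x hx y hy hadj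
        by_cases hxx : x = x₁ <;> by_cases hyy : y = x₁
        · exact absurd (hxx.trans hyy.symm) hadj.1
        · simp only [hxx, if_true, hyy, if_false]
          exact (lt_of_lt_of_le (hf'lt y (Finset.mem_erase.2 ⟨hyy, hy⟩)) (le_refl n')).ne'
        · simp only [hxx, if_false, hyy, if_true]
          exact (lt_of_lt_of_le (hf'lt x (Finset.mem_erase.2 ⟨hxx, hx⟩)) (le_refl n')).ne
        · simp only [hxx, hyy, if_false]
          exact hf' x (Finset.mem_erase.2 ⟨hxx, hx⟩) y (Finset.mem_erase.2 ⟨hyy, hy⟩) hadj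
    · -- n' = n : Lovász's argument
      have hn1 : 1 ≤ n := by
        have : ({x₀} : Finset (V × ℕ)).card ≤ n' := by
          refine le_om G ?_ ?_
          · simpa using hx₀'
          · intro x hx y hy hxy
            simp only [Finset.mem_singleton] at hx hy
            exact absurd (hx.trans hy.symm) hxy
        simpa [heq] using this
      set A := s'.filter (fun y => f' y = f' x₀) with hA'
      set W := s'.filter (fun y => f' y ≠ f' x₀ ∨ y = x₀) with hW
      have hWs' : W ⊆ s' := Finset.filter_subset _ _
      have hWs : W ⊂ s := lt_of_le_of_lt hWs' hss
      obtain ⟨g, hglt, hg⟩ := ih W hWs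
      -- om W ≤ n - 1
      have homW : om G W ≤ n - 1 := by
        refine om_le G ?_
        intro t htW htcl
        by_contra hgt
        push_neg at hgt
        have hts' : t ⊆ s' := htW.trans hWs'
        have hts : t ⊆ s := hts'.trans (Finset.erase_subset _ _)
        have htn : t.card ≤ n := le_om G hts htcl
        have htcard : t.card = n := by omega
        -- f' is injective on t
        have hinj : Set.InjOn f' ↑t := by
          intro a ha b hb hab
          by_contra hne'
          exact hf' a (hts' ha) b (hts' hb) (htcl a ha b hb hne') hab
        have himg : t.image f' = Finset.range n := by
          apply Finset.eq_of_subset_of_card_le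
          · intro m hm
            simp only [Finset.mem_image] at hm
            obtain ⟨a, ha, rfl⟩ := hm
            simpa using lt_of_lt_of_le (hf'lt a (hts' ha)) (le_of_eq heq)
          · rw [Finset.card_range, Finset.card_image_of_injOn hinj, htcard]
        have hx₀mem : f' x₀ ∈ t.image f' := by
          rw [himg]
          simpa using lt_of_lt_of_le (hf'lt x₀ hx₀') (le_of_eq heq)
        simp only [Finset.mem_image] at hx₀mem
        obtain ⟨y, hyt, hyf⟩ := hx₀mem
        have hyx₀ : y = x₀ := by
          have := htW hyt
          rw [hW, Finset.mem_filter] at this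
          rcases this.2 with h | h
          · exact absurd hyf h
          · exact h
        have hx₀t : x₀ ∈ t := hyx₀ ▸ hyt
        -- insert the twin x₁ : bigger clique, contradiction
        have hx₁t : x₁ ∉ t := fun h => hx₁s' (hts' h)
        have hclins : IsCl G (insert x₁ t) := by
          intro a ha b hb hab
          rcases Finset.mem_insert.1 ha with rfl | ha' <;>
            rcases Finset.mem_insert.1 hb with rfl | hb'
          · exact absurd rfl hab
          · by_cases hbx : b = x₀
            · exact ⟨hab, Or.inl (by rw [hbx, ← hfst])⟩
            · have := htcl x₀ hx₀t b hb' (fun h => hbx h.symm)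
              refine ⟨hab, ?_⟩
              rcases this.2 with h | h
              · exact Or.inl (by rw [← hfst]; exact h)
              · exact Or.inr (by rw [← hfst]; exact h)
          · by_cases hax : a = x₀
            · exact ⟨hab, Or.inl (by rw [hax, hfst])⟩
            · have := htcl a ha' x₀ hx₀t hax
              refine ⟨hab, ?_⟩
              rcases this.2 with h | h
              · exact Or.inl (by rw [← hfst]; exact h)
              · exact Or.inr (by rw [← hfst]; exact h)
          · exact htcl a ha' b hb' hab
        have : (insert x₁ t).card ≤ n := le_om G (Finset.insert_subset hx₁ hts) hclins
        rw [Finset.card_insert_of_notMem hx₁t, htcard] at this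
        omega
      -- assemble the coloring of s
      refine ⟨fun x => if x = x₁ ∨ (x ∈ A ∧ x ≠ x₀) then n - 1 else g x, ?_, ?_⟩
      · intro x hx
        by_cases hsp : x = x₁ ∨ (x ∈ A ∧ x ≠ x₀)
        · simp only [hsp, if_true]; omega
        · simp only [hsp, if_false]
          push_neg at hsp
          have hxs' : x ∈ s' := Finset.mem_erase.2 ⟨hsp.1, hx⟩
          have hxW : x ∈ W := by
            rw [hW, Finset.mem_filter]
            refine ⟨hxs', ?_⟩
            by_cases hxx₀ : x = x₀
            · exact Or.inr hxx₀
            · left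
              intro hfeq
              exact hxx₀ (hsp.2 (by rw [hA', Finset.mem_filter]; exact ⟨hxs', hfeq⟩))
          have := lt_of_lt_of_le (hglt x hxW) homW
          omega
      · intro x hx y hy hadj
        have hmemW : ∀ z ∈ s, ¬(z = x₁ ∨ (z ∈ A ∧ z ≠ x₀)) → z ∈ W := by
          intro z hz hsp
          push_neg at hsp
          have hzs' : z ∈ s' := Finset.mem_erase.2 ⟨hsp.1, hz⟩
          rw [hW, Finset.mem_filter]
          refine ⟨hzs', ?_⟩
          by_cases hzx₀ : z = x₀
          · exact Or.inr hzx₀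
          · left
            intro hfeq
            exact hzx₀ (hsp.2 (by rw [hA', Finset.mem_filter]; exact ⟨hzs', hfeq⟩))
        -- special vertices are pairwise non-adjacent
        have hspecial : ∀ z w : V × ℕ, z ∈ s → w ∈ s →
            (z = x₁ ∨ (z ∈ A ∧ z ≠ x₀)) → (w = x₁ ∨ (w ∈ A ∧ w ≠ x₀)) → AdjB G z w → False := by
          intro z w hz hw hzc hwc hzw
          have key : ∀ a : V × ℕ, a ∈ A → a ≠ x₀ → ¬ AdjB G x₁ a := by
            intro a haA hax₀ hadj'
            rw [hA', Finset.mem_filter] at haA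
            have : AdjB G x₀ a := by
              refine ⟨fun h => hax₀ h.symm, ?_⟩
              rcases hadj'.2 with h | h
              · exact Or.inl (by rw [hfst]; exact h)
              · exact Or.inr (by rw [hfst]; exact h)
            exact hf' x₀ hx₀' a haA.1 this haA.2.symm
          rcases hzc with rfl | ⟨hzA, hzx₀⟩ <;> rcases hwc with rfl | ⟨hwA, hwx₀⟩
          · exact hzw.1 rfl
          · exact key w hwA hwx₀ hzw
          · exact key z hzA hzx₀ ⟨hzw.1.symm, by
              rcases hzw.2 with h | h
              · exact Or.inl h.symm
              · exact Or.inr h.symm⟩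
          · rw [hA', Finset.mem_filter] at hzA hwA
            exact hf' z hzA.1 w hwA.1 hzw (hzA.2.trans hwA.2.symm)
        by_cases hxc : x = x₁ ∨ (x ∈ A ∧ x ≠ x₀) <;>
          by_cases hyc : y = x₁ ∨ (y ∈ A ∧ y ≠ x₀)
        · exact absurd hadj (fun h => hspecial x y hx hy hxc hyc h)
        · simp only [hxc, hyc, if_true, if_false]
          have := lt_of_lt_of_le (hglt y (hmemW y hy hyc)) homW
          omega
        · simp only [hxc, hyc, if_true, if_false]
          have := lt_of_lt_of_le (hglt x (hmemW x hx hxc)) homW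
          omega
        · simp only [hxc, hyc, if_false]
          exact hg x (hmemW x hx hxc) y (hmemW y hy hyc) hadj
  · -- no twins: isomorphic to an induced subgraph of G; use perfection
    push_neg at hA
    set σ : Set V := {v | ∃ i, (v, i) ∈ s} with hσ
    haveI : Fintype ↥σ := Fintype.ofFinite _
    obtain ⟨C⟩ := hP σ
    set m := (G.induce σ).cliqueNum with hm
    have hmle : m ≤ om G s := by
      obtain ⟨u, hu⟩ := SimpleGraph.exists_isNClique_cliqueNum (G := G.induce σ)
      have hlift : ∀ z : ↥σ, (z.1, z.2.choose) ∈ s := fun z => z.2.choose_spec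
      set t := u.image (fun z : ↥σ => (z.1, z.2.choose)) with ht
      have hinj : Set.InjOn (fun z : ↥σ => (z.1, z.2.choose)) ↑u := by
        intro a ha b hb hab
        exact Subtype.ext (congrArg Prod.fst hab)
      have htcard : t.card = m := by
        rw [ht, Finset.card_image_of_injOn hinj, hu.2]
      have htsub : t ⊆ s := by
        intro a ha
        rw [ht, Finset.mem_image] at ha
        obtain ⟨z, _, rfl⟩ := ha
        exact hlift z
      have htcl : IsCl G t := by
        intro a ha b hb hab
        rw [ht, Finset.mem_image] at ha hb
        obtain ⟨z, hz, rfl⟩ := ha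
        obtain ⟨w, hw, rfl⟩ := hb
        have hzw : z ≠ w := fun h => hab (by rw [h])
        have : (G.induce σ).Adj z w := hu.1 hz hw hzw
        refine ⟨hab, Or.inr ?_⟩
        simpa using this
      calc m = t.card := htcard.symm
        _ ≤ om G s := le_om G htsub htcl
    refine ⟨fun x => if h : x.1 ∈ σ then (C ⟨x.1, h⟩ : ℕ) else 0, ?_, ?_⟩
    · intro x hx
      have hxσ : x.1 ∈ σ := ⟨x.2, by simpa using hx⟩
      simp only [hxσ, dif_pos]
      exact lt_of_lt_of_le (C ⟨x.1, hxσ⟩).2 hmle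
    · intro x hx y hy hadj
      have hxσ : x.1 ∈ σ := ⟨x.2, by simpa using hx⟩
      have hyσ : y.1 ∈ σ := ⟨y.2, by simpa using hy⟩
      simp only [hxσ, hyσ, dif_pos]
      have hfne : x.1 ≠ y.1 := hA x hx y hy hadj.1
      have hGadj : G.Adj x.1 y.1 := by
        rcases hadj.2 with h | h
        · exact absurd h hfne
        · exact h
      have : (G.induce σ).Adj ⟨x.1, hxσ⟩ ⟨y.1, hyσ⟩ := by simpa using hGadj
      have := C.valid this
      exact fun h => this (Fin.ext h)


end Part1

section Part2

variable {V : Type} (G : SimpleGraph V)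

def Indep (A : Finset V) : Prop := ∀ u ∈ A, ∀ v ∈ A, u ≠ v → ¬ G.Adj u v
def Cliq (K : Finset V) : Prop := ∀ u ∈ K, ∀ v ∈ K, u ≠ v → G.Adj u v

open scoped Classical in
noncomputable def al (t : Finset V) : ℕ := (t.powerset.filter (Indep G)).sup Finset.card

lemma Indep.empty : Indep G (∅ : Finset V) := by intro x hx; simp at hx

lemma le_al {t A : Finset V} (hAt : A ⊆ t) (hA : Indep G A) : A.card ≤ al G t := by
  classical
  exact le_sup (by simp [al, Finset.mem_filter, Finset.mem_powerset, hAt, hA])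

lemma al_le {t : Finset V} {n : ℕ} (h : ∀ A ⊆ t, Indep G A → A.card ≤ n) : al G t ≤ n := by
  classical
  refine Finset.sup_le ?_
  intro A hA
  simp only [Finset.mem_filter, Finset.mem_powerset] at hA
  exact h A hA.1 hA.2

lemma exists_max_indep (t : Finset V) : ∃ A ⊆ t, Indep G A ∧ A.card = al G t := by
  classical
  have hne : (t.powerset.filter (Indep G)).Nonempty := ⟨∅, by simp [Indep.empty]⟩
  obtain ⟨A, hA, hcard⟩ := Finset.exists_mem_eq_sup _ hne Finset.card
  simp only [Finset.mem_filter, Finset.mem_powerset] at hA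
  exact ⟨A, hA.1, hA.2, hcard.symm⟩

lemma one_le_al {t : Finset V} (hne : t.Nonempty) : 1 ≤ al G t := by
  obtain ⟨v, hv⟩ := hne
  have : ({v} : Finset V).card ≤ al G t := by
    refine le_al G (by simpa using hv) ?_
    intro x hx y hy hxy
    simp only [Finset.mem_singleton] at hx hy
    exact absurd (hx.trans hy.symm) hxy
  simpa using this

/-- An `AdjB`-independent set over `t` has size at most `al G t`. -/
lemma indep_class {t : Finset V} {B : Finset (V × ℕ)} (hB : ∀ x ∈ B, x.1 ∈ t)
    (hnadj : ∀ x ∈ B, ∀ y ∈ B, x ≠ y → ¬ AdjB G x y) : B.card ≤ al G t := by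
  classical
  have hinj : Set.InjOn (Prod.fst : V × ℕ → V) ↑B := by
    intro x hx y hy hxy
    by_contra hne
    have := hnadj x hx y hy hne
    exact this ⟨hne, Or.inl hxy⟩
  have hcard : B.card = (B.image Prod.fst).card := (Finset.card_image_of_injOn hinj).symm
  rw [hcard]
  refine le_al G ?_ ?_
  · intro v hv
    simp only [Finset.mem_image] at hv
    obtain ⟨x, hx, rfl⟩ := hv
    exact hB x hx
  · intro u hu v hv huv
    simp only [Finset.mem_image] at hu hv
    obtain ⟨x, hx, rfl⟩ := hu
    obtain ⟨y, hy, rfl⟩ := hv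
    have hxy : x ≠ y := fun h => huv (by rw [h])
    intro hadj
    exact hnadj x hx y hy hxy ⟨hxy, Or.inr hadj⟩

/-- Key lemma: in a perfect graph there is a clique meeting every maximum
independent subset of `t`. -/
lemma exists_hitting_clique [Fintype V]
    (hP : ∀ σ : Set V, (G.induce σ).Colorable (G.induce σ).cliqueNum)
    {t : Finset V} (hne : t.Nonempty) :
    ∃ K ⊆ t, Cliq G K ∧ ∀ A ⊆ t, Indep G A → A.card = al G t → ∃ v ∈ K, v ∈ A := by
  classical
  by_contra hcon
  push_neg at hcon
  set a := al G t with ha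
  have ha1 : 1 ≤ a := one_le_al G hne
  set 𝒦 := t.powerset.filter (Cliq G) with h𝒦
  have hmem𝒦 : ∀ K, K ∈ 𝒦 ↔ K ⊆ t ∧ Cliq G K := by
    intro K; simp [h𝒦, Finset.mem_filter, Finset.mem_powerset]
  have hemp : (∅ : Finset V) ∈ 𝒦 := by
    rw [hmem𝒦]
    exact ⟨Finset.empty_subset _, by intro x hx; simp at hx⟩
  set c := 𝒦.card with hc
  have hc1 : 1 ≤ c := Finset.card_pos.2 ⟨∅, hemp⟩
  have hch : ∀ K : Finset V, ∃ A : Finset V,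
      K ∈ 𝒦 → A ⊆ t ∧ Indep G A ∧ A.card = a ∧ ∀ v ∈ K, v ∉ A := by
    intro K
    by_cases hK : K ∈ 𝒦
    · rw [hmem𝒦] at hK
      obtain ⟨A, hAt, hAi, hAc, hAK⟩ := hcon K hK.1 hK.2
      exact ⟨A, fun _ => ⟨hAt, hAi, hAc, hAK⟩⟩
    · exact ⟨∅, fun h => absurd h hK⟩
  choose A hA using hch
  set k : V → ℕ := fun v => (𝒦.filter (fun K => v ∈ A K)).card with hk
  set s : Finset (V × ℕ) :=
    t.biUnion (fun v => (Finset.range (k v)).image (fun i => (v, i))) with hs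
  have hmems : ∀ p : V × ℕ, p ∈ s ↔ p.1 ∈ t ∧ p.2 < k p.1 := by
    intro p
    simp only [hs, Finset.mem_biUnion, Finset.mem_image, Finset.mem_range]
    constructor
    · rintro ⟨v, hv, i, hi, rfl⟩; exact ⟨hv, hi⟩
    · rintro ⟨hv, hi⟩; exact ⟨p.1, hv, p.2, hi, rfl⟩
  -- |s| = c * a
  have hscard : s.card = c * a := by
    rw [hs, Finset.card_biUnion]
    · have h1 : ∀ v ∈ t, ((Finset.range (k v)).image (fun i => (v, i))).card = k v := by
        intro v _
        rw [Finset.card_image_of_injective _ (fun i j h => congrArg Prod.snd h),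
          Finset.card_range]
      rw [Finset.sum_congr rfl h1]
      have h2 : ∀ v ∈ t, k v = ∑ K ∈ 𝒦, if v ∈ A K then 1 else 0 := by
        intro v _
        rw [hk]
        exact Finset.card_filter _ _
      rw [Finset.sum_congr rfl h2, Finset.sum_comm]
      have h3 : ∀ K ∈ 𝒦, (∑ v ∈ t, if v ∈ A K then 1 else 0) = a := by
        intro K hK
        rw [← Finset.card_filter]
        have : t.filter (fun v => v ∈ A K) = A K := by
          apply Finset.Subset.antisymm
          · intro v hv; exact (Finset.mem_filter.1 hv).2
          · intro v hv
            exact Finset.mem_filter.2 ⟨(hA K hK).1 hv, hv⟩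
        rw [this, (hA K hK).2.2.1]
      rw [Finset.sum_congr rfl h3, Finset.sum_const, smul_eq_mul]
    · intro u hu v hv huv
      simp only [Finset.disjoint_left]
      intro p hp hp'
      simp only [Finset.mem_image, Finset.mem_range] at hp hp'
      obtain ⟨i, _, rfl⟩ := hp
      obtain ⟨j, _, hj⟩ := hp'
      exact huv (congrArg Prod.fst hj).symm
  -- om G s ≤ c - 1
  have hom : om G s ≤ c - 1 := by
    refine om_le G ?_
    intro t' ht's ht'cl
    set K' := t'.image Prod.fst with hK'
    have hK't : K' ⊆ t := by
      intro v hv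
      simp only [hK', Finset.mem_image] at hv
      obtain ⟨x, hx, rfl⟩ := hv
      exact ((hmems x).1 (ht's hx)).1
    have hK'cl : Cliq G K' := by
      intro u hu v hv huv
      simp only [hK', Finset.mem_image] at hu hv
      obtain ⟨x, hx, rfl⟩ := hu
      obtain ⟨y, hy, rfl⟩ := hv
      have hxy : x ≠ y := fun h => huv (by rw [h])
      rcases (ht'cl x hx y hy hxy).2 with h | h
      · exact absurd h huv
      · exact h
    have hK'𝒦 : K' ∈ 𝒦 := (hmem𝒦 K').2 ⟨hK't, hK'cl⟩
    have hfiber : ∀ v ∈ K', (t'.filter (fun x => x.1 = v)).card ≤ k v := by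
      intro v _
      have : (t'.filter (fun x => x.1 = v)).card ≤ (Finset.range (k v)).card := by
        refine Finset.card_le_card_of_injOn Prod.snd ?_ ?_
        · intro x hx
          simp only [Finset.mem_coe, Finset.mem_filter] at hx
          have := ((hmems x).1 (ht's hx.1)).2
          rw [hx.2] at this
          simpa using this
        · intro x hx y hy hxy
          simp only [Finset.coe_filter, Set.mem_setOf_eq] at hx hy
          exact Prod.ext (hx.2.trans hy.2.symm) hxy
      simpa using this
    calc t'.card = ∑ v ∈ K', (t'.filter (fun x => x.1 = v)).card :=
          Finset.card_eq_sum_card_image Prod.fst t'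
      _ ≤ ∑ v ∈ K', k v := Finset.sum_le_sum hfiber
      _ = ∑ v ∈ K', ∑ K ∈ 𝒦, (if v ∈ A K then 1 else 0) := by
          refine Finset.sum_congr rfl ?_
          intro v _
          rw [hk]
          exact Finset.card_filter _ _
      _ = ∑ K ∈ 𝒦, (K' ∩ A K).card := by
          rw [Finset.sum_comm]
          refine Finset.sum_congr rfl ?_
          intro K _
          rw [← Finset.card_filter]
          congr 1
      _ ≤ c - 1 := by
          have hzero : (K' ∩ A K').card = 0 := by
            rw [Finset.card_eq_zero]
            ext v
            simp only [Finset.mem_inter, Finset.notMem_empty, iff_false, not_and]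
            exact (hA K' hK'𝒦).2.2.2 v
          have hone : ∀ K ∈ 𝒦.erase K', (K' ∩ A K).card ≤ 1 := by
            intro K hK
            rw [Finset.card_le_one]
            intro u hu v hv
            by_contra huv
            have hu' := Finset.mem_inter.1 hu
            have hv' := Finset.mem_inter.1 hv
            have hadj := hK'cl u hu'.1 v hv'.1 huv
            exact (hA K (Finset.mem_of_mem_erase hK)).2.1 u hu'.2 v hv'.2 huv hadj
          calc (∑ K ∈ 𝒦, (K' ∩ A K).card)
              = (K' ∩ A K').card + ∑ K ∈ 𝒦.erase K', (K' ∩ A K).card :=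
                (Finset.add_sum_erase 𝒦 _ hK'𝒦).symm
            _ ≤ 0 + (𝒦.erase K').card * 1 := by
                rw [hzero]
                exact Nat.add_le_add_left
                  (by simpa using Finset.sum_le_card_nsmul _ _ 1 hone) 0
            _ = c - 1 := by
                rw [Finset.card_erase_of_mem hK'𝒦]
                omega
  -- pigeonhole contradiction
  obtain ⟨f, hflt, hf⟩ := main G hP s
  have hcs : s.card = ∑ i ∈ Finset.range (c - 1), (s.filter (fun x => f x = i)).card := by
    refine Finset.card_eq_sum_card_fiberwise ?_
    intro x hx
    simp only [Finset.mem_coe, Finset.mem_range]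
    exact lt_of_lt_of_le (hflt x hx) hom
  have hclass : ∀ i, (s.filter (fun x => f x = i)).card ≤ a := by
    intro i
    refine indep_class G ?_ ?_
    · intro x hx
      exact ((hmems x).1 (Finset.mem_filter.1 hx).1).1
    · intro x hx y hy hxy hadj
      have hx' := Finset.mem_filter.1 hx
      have hy' := Finset.mem_filter.1 hy
      exact hf x hx'.1 y hy'.1 hadj (hx'.2.trans hy'.2.symm)
  have : c * a ≤ (c - 1) * a := by
    rw [← hscard, hcs]
    calc (∑ i ∈ Finset.range (c - 1), (s.filter (fun x => f x = i)).card)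
        ≤ ∑ _i ∈ Finset.range (c - 1), a := Finset.sum_le_sum (fun i _ => hclass i)
      _ = (c - 1) * a := by rw [Finset.sum_const, Finset.card_range, smul_eq_mul]
  have h1 : (c - 1) * a < c * a := by
    have : c - 1 < c := by omega
    exact Nat.mul_lt_mul_of_lt_of_le this (le_refl a) ha1
  omega




lemma clique_cover [Fintype V] (G : SimpleGraph V)
    (hP : ∀ σ : Set V, (G.induce σ).Colorable (G.induce σ).cliqueNum) :
    ∀ t : Finset V, ∃ F : Finset (Finset V),
      F.card ≤ al G t ∧ (∀ K ∈ F, Cliq G K ∧ K.Nonempty) ∧ ∀ v ∈ t, ∃ K ∈ F, v ∈ K := by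
  classical
  intro t
  induction t using Finset.strongInduction with
  | _ t ih =>
  rcases Finset.eq_empty_or_nonempty t with rfl | hne
  · exact ⟨∅, by simp⟩
  · obtain ⟨K, hKt, hKcl, hKhit⟩ := exists_hitting_clique G hP hne
    have hKne : K.Nonempty := by
      obtain ⟨A, hAt, hAi, hAc⟩ := exists_max_indep G t
      obtain ⟨v, hv, _⟩ := hKhit A hAt hAi hAc
      exact ⟨v, hv⟩
    set t' := t \ K with ht'
    have htt' : t' ⊂ t := Finset.sdiff_ssubset hKt hKne
    have hal' : al G t' ≤ al G t - 1 := by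
      refine al_le G ?_
      intro A hAt' hAi
      have hAt : A ⊆ t := hAt'.trans (Finset.sdiff_subset)
      have h1 : A.card ≤ al G t := le_al G hAt hAi
      have h2 : A.card ≠ al G t := by
        intro hAc
        obtain ⟨v, hvK, hvA⟩ := hKhit A hAt hAi hAc
        exact (Finset.mem_sdiff.1 (hAt' hvA)).2 hvK
      omega
    obtain ⟨F', hF'c, hF'p, hF'cov⟩ := ih t' htt'
    refine ⟨insert K F', ?_, ?_, ?_⟩
    · have h1 : 1 ≤ al G t := one_le_al G hne
      calc (insert K F').card ≤ F'.card + 1 := Finset.card_insert_le _ _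
        _ ≤ (al G t - 1) + 1 := by omega
        _ = al G t := by omega
    · intro K' hK'
      rcases Finset.mem_insert.1 hK' with rfl | hK'
      · exact ⟨hKcl, hKne⟩
      · exact hF'p K' hK'
    · intro v hv
      by_cases hvK : v ∈ K
      · exact ⟨K, Finset.mem_insert_self _ _, hvK⟩
      · obtain ⟨K', hK', hvK'⟩ := hF'cov v (Finset.mem_sdiff.2 ⟨hv, hvK⟩)
        exact ⟨K', Finset.mem_insert_of_mem hK', hvK'⟩

lemma exists_source (G : SimpleGraph V) (arc : V → V → Prop)
    (horient₁ : ∀ u v, arc u v → G.Adj u v)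
    (horient₂ : ∀ u v, G.Adj u v → arc u v ∨ arc v u)
    (htri : ¬ ∃ a b c, arc a b ∧ arc b c ∧ arc c a)
    {K : Finset V} (hK : Cliq G K) (hne : K.Nonempty) :
    ∃ w ∈ K, ∀ v ∈ K, v ≠ w → arc w v := by
  classical
  have hirr : ∀ u, ¬ arc u u := fun u h => G.loopless.irrefl u (horient₁ u u h)
  obtain ⟨w, hwK, hmax⟩ := Finset.exists_max_image K
    (fun w => (K.filter (fun u => arc w u)).card) hne
  refine ⟨w, hwK, ?_⟩
  intro v hvK hvw
  by_contra hwv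
  have hadj : G.Adj w v := hK w hwK v hvK (fun h => hvw h.symm)
  have harc : arc v w := by
    rcases horient₂ w v hadj with h | h
    · exact absurd h hwv
    · exact h
  have hsub : insert w (K.filter (fun u => arc w u)) ⊆ K.filter (fun u => arc v u) := by
    intro u hu
    rcases Finset.mem_insert.1 hu with rfl | hu
    · exact Finset.mem_filter.2 ⟨hwK, harc⟩
    · have hu' := Finset.mem_filter.1 hu
      have hUV : u ≠ v := fun h => hwv (h ▸ hu'.2)
      have hAdjuv : G.Adj u v := hK u hu'.1 v hvK hUV
      rcases horient₂ u v hAdjuv with h | h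
      · exact absurd ⟨w, u, v, hu'.2, h, harc⟩ htri
      · exact Finset.mem_filter.2 ⟨hu'.1, h⟩
  have hwnot : w ∉ K.filter (fun u => arc w u) := by
    intro h
    exact hirr w (Finset.mem_filter.1 h).2
  have h1 : (K.filter (fun u => arc w u)).card + 1 ≤ (K.filter (fun u => arc v u)).card := by
    calc (K.filter (fun u => arc w u)).card + 1
        = (insert w (K.filter (fun u => arc w u))).card :=
          (Finset.card_insert_of_notMem hwnot).symm
      _ ≤ _ := Finset.card_le_card hsub
  have h2 := hmax v hvK
  omega

theorem final
    (V : Type) [Fintype V]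
    (G : SimpleGraph V)
    (hperf : ∀ s : Set V, (G.induce s).chromaticNumber = ((G.induce s).cliqueNum : ℕ∞))
    (arc : V → V → Prop)
    (horient₁ : ∀ u v, arc u v → G.Adj u v)
    (horient₂ : ∀ u v, G.Adj u v → arc u v ∨ arc v u)
    (hasym : ∀ u v, arc u v → ¬ arc v u)
    (htri : ¬ ∃ a b c, arc a b ∧ arc b c ∧ arc c a)
    (α : ℕ)
    (halpha : IsGreatest {n : ℕ | ∃ s : Finset V, s.card = n ∧
        ∀ u ∈ s, ∀ v ∈ s, u ≠ v → ¬ G.Adj u v} α) :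
    ∃ S : Finset V, S.card ≤ α ∧
      ∀ v : V, v ∈ S ∨ ∃ w ∈ S, arc w v := by
  classical
  have hP : ∀ σ : Set V, (G.induce σ).Colorable (G.induce σ).cliqueNum := by
    intro σ
    haveI : Fintype ↥σ := Fintype.ofFinite _
    exact (SimpleGraph.chromaticNumber_le_iff_colorable).1 (le_of_eq (hperf σ))
  have halal : al G Finset.univ ≤ α := by
    obtain ⟨A, _, hAi, hAc⟩ := exists_max_indep G (Finset.univ : Finset V)
    exact hAc ▸ halpha.2 ⟨A, rfl, hAi⟩
  obtain ⟨F, hFc, hFp, hFcov⟩ := clique_cover G hP Finset.univ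
  have hsrc : ∀ K : Finset V, ∀ _ : K ∈ F, ∃ w, w ∈ K ∧ ∀ v ∈ K, v ≠ w → arc w v := by
    intro K hK
    obtain ⟨w, h1, h2⟩ :=
      exists_source G arc horient₁ horient₂ htri (hFp K hK).1 (hFp K hK).2
    exact ⟨w, h1, h2⟩
  set src : {K // K ∈ F} → V := fun K => (hsrc K.1 K.2).choose with hsrcdef
  refine ⟨F.attach.image src, ?_, ?_⟩
  · calc (F.attach.image src).card ≤ F.attach.card := Finset.card_image_le
      _ = F.card := Finset.card_attach
      _ ≤ al G Finset.univ := hFc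
      _ ≤ α := halal
  · intro v
    obtain ⟨K, hKF, hvK⟩ := hFcov v (Finset.mem_univ v)
    obtain ⟨hw1, hw2⟩ := (hsrc K hKF).choose_spec
    set w := (hsrc K hKF).choose with hwdef
    have hwS : w ∈ F.attach.image src :=
      Finset.mem_image.2 ⟨⟨K, hKF⟩, Finset.mem_attach _ _, rfl⟩
    by_cases hvw : v = w
    · exact Or.inl (hvw ▸ hwS)
    · exact Or.inr ⟨w, hwS, hw2 v hvK hvw⟩



end Part2

end Statement12Aux

/-- If `G` is a finite perfect graph (for every induced subgraph,
chromatic number = clique number) and `D` (given by `arc`) is a clique-acyclic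
orientation of `G`, then `γ(D) ≤ α(G)`. -/
theorem perfect_cliqueAcyclic_orientation_domination
    (V : Type) [Fintype V]
    (G : SimpleGraph V)
    (hperf : ∀ s : Set V, (G.induce s).chromaticNumber = ((G.induce s).cliqueNum : ℕ∞))
    (arc : V → V → Prop)
    (horient₁ : ∀ u v, arc u v → G.Adj u v)
    (horient₂ : ∀ u v, G.Adj u v → arc u v ∨ arc v u)
    (hasym : ∀ u v, arc u v → ¬ arc v u)
    (htri : ¬ ∃ a b c, arc a b ∧ arc b c ∧ arc c a)
    (α : ℕ)
    (halpha : IsGreatest {n : ℕ | ∃ s : Finset V, s.card = n ∧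
        ∀ u ∈ s, ∀ v ∈ s, u ≠ v → ¬ G.Adj u v} α) :
    ∃ S : Finset V, S.card ≤ α ∧
      ∀ v : V, v ∈ S ∨ ∃ w ∈ S, arc w v := by
  exact Statement12Aux.final V G hperf arc horient₁ horient₂ hasym htri α halpha
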